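/- arXiv:1803.03919 — 2 statements merged into one kernel-verified Lean document; each statement's English description precedes it below -/
import Mathlib

section
/- Let L : ℝ^{pq} → ℝ be twice continuously differentiable with ρ₋‖z‖₂² ≤ zᵀ∇²L(β)z ≤ ρ₊‖z‖₂² for every β and every z with ‖z‖_{0,2} ≤ s, and let W : ℝ^{pq} → ℝ be differentiable, concave, and such that ∇W is η₋-Lipschitz for some η₋ ≥ 0. Then the augmented loss L̃ = L + W satisfies, for all β, β' with |{j : β_j ≠ 0 or β'_j ≠ 0}| ≤ s, ((ρ₋ − η₋)/2)‖β'−β‖₂² ≤ L̃(β') − L̃(β) − ⟨β'−β, ∇L̃(β)⟩ ≤ (ρ₊/2)‖β'−β‖₂². -/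
open RealInnerProductSpace
noncomputable section

/-- The `j`-th block (in `ℝ^q`) of a vector `β ∈ ℝ^{pq}`. -/
def blk {p q : ℕ} (β : EuclideanSpace ℝ (Fin p × Fin q)) (j : Fin p) :
    EuclideanSpace ℝ (Fin q) := WithLp.toLp 2 (fun k => β (j, k))

/-- The group `ℓ_{0,2}` "norm": the number of nonzero blocks. -/
def blockCount {p q : ℕ} (β : EuclideanSpace ℝ (Fin p × Fin q)) : ℕ :=
  {j : Fin p | blk β j ≠ 0}.ncard

lemma monoOn01 (f f' : ℝ → ℝ) (hf : ∀ t, HasDerivAt f (f' t) t)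
    (h0 : ∀ t ∈ Set.Icc (0:ℝ) 1, 0 ≤ f' t) : MonotoneOn f (Set.Icc 0 1) := by
  apply monotoneOn_of_deriv_nonneg (convex_Icc 0 1)
    (fun t _ => (hf t).continuousAt.continuousWithinAt)
    (fun t _ => (hf t).differentiableAt.differentiableWithinAt)
  intro t ht
  rw [(hf t).deriv]
  rw [interior_Icc] at ht
  exact h0 t (Set.Ioo_subset_Icc_self ht)

lemma taylor_lower (g g' g'' : ℝ → ℝ) (hg : ∀ t, HasDerivAt g (g' t) t)
    (hg' : ∀ t, HasDerivAt g' (g'' t) t) (c : ℝ)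
    (hc : ∀ t ∈ Set.Icc (0:ℝ) 1, c ≤ g'' t) :
    c / 2 ≤ g 1 - g 0 - g' 0 := by
  have h1 : ∀ t ∈ Set.Icc (0:ℝ) 1, 0 ≤ g' t - g' 0 - c * t := by
    have hm : MonotoneOn (fun t => g' t - c * t) (Set.Icc 0 1) := by
      apply monoOn01 _ (fun t => g'' t - c)
      · intro t
        exact (hg' t).sub (((hasDerivAt_id t).const_mul c).congr_deriv (mul_one c))
      · intro t ht; linarith [hc t ht]
    intro t ht
    have := hm (Set.left_mem_Icc.2 zero_le_one) ht ht.1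
    simp only [mul_zero, sub_zero] at this
    linarith
  have hm2 : MonotoneOn (fun t => g t - g' 0 * t - c * (t ^ 2 / 2)) (Set.Icc 0 1) := by
    apply monoOn01 _ (fun t => g' t - g' 0 - c * t)
    · intro t
      have h2 : HasDerivAt (fun t : ℝ => g' 0 * t) (g' 0) t :=
        ((hasDerivAt_id t).const_mul (g' 0)).congr_deriv (mul_one _)
      have h3 : HasDerivAt (fun t : ℝ => c * (t ^ 2 / 2)) (c * t) t := by
        have : HasDerivAt (fun t : ℝ => t ^ 2 / 2) t t := by
          simpa using ((hasDerivAt_pow 2 t).div_const 2)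
        simpa using this.const_mul c
      exact ((hg t).sub h2).sub h3
    · exact h1
  have := hm2 (Set.left_mem_Icc.2 zero_le_one) (Set.right_mem_Icc.2 zero_le_one) zero_le_one
  simp only at this
  nlinarith [this]


set_option maxHeartbeats 1000000 in
/-- Restricted strong convexity / smoothness of the augmented loss `L̃ = L + W`,
where `W` is differentiable, concave with `η₋`-Lipschitz gradient. -/
theorem augmented_loss_rsc_rs {p q : ℕ} (s : ℕ) (hs : 0 < s)
    (L W : EuclideanSpace ℝ (Fin p × Fin q) → ℝ) (hL : ContDiff ℝ 2 L)
    (ρm ρp : ℝ)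
    (hHess : ∀ β z : EuclideanSpace ℝ (Fin p × Fin q), blockCount z ≤ s →
      ρm * ‖z‖ ^ 2 ≤ iteratedFDeriv ℝ 2 L β ![z, z] ∧
        iteratedFDeriv ℝ 2 L β ![z, z] ≤ ρp * ‖z‖ ^ 2)
    (hW : Differentiable ℝ W) (hWconc : ConcaveOn ℝ Set.univ W)
    (η : ℝ) (hη : 0 ≤ η) (hWLip : LipschitzWith η.toNNReal (gradient W))
    (β β' : EuclideanSpace ℝ (Fin p × Fin q))
    (hsupp : {j : Fin p | blk β j ≠ 0 ∨ blk β' j ≠ 0}.ncard ≤ s) :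
    (ρm - η) / 2 * ‖β' - β‖ ^ 2 ≤
        (L β' + W β') - (L β + W β) -
          ⟪β' - β, gradient (fun b => L b + W b) β⟫ ∧
      (L β' + W β') - (L β + W β) -
          ⟪β' - β, gradient (fun b => L b + W b) β⟫ ≤ ρp / 2 * ‖β' - β‖ ^ 2 := by
  set v := β' - β with hvdef
  -- sparsity of v
  have hv : blockCount v ≤ s := by
    refine le_trans (Set.ncard_le_ncard ?_ (Set.toFinite _)) hsupp
    intro j hj
    by_contra h
    simp only [Set.mem_setOf_eq, not_or, not_not] at h hj
    apply hj
    have hblk : blk v j = blk β' j - blk β j := by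
      ext k; simp [blk, hvdef]
    rw [hblk, h.1, h.2, sub_zero]
  -- the line
  have hline : ∀ t : ℝ, HasDerivAt (fun t : ℝ => β + t • v) v t := by
    intro t
    have : HasDerivAt (fun t : ℝ => t • v) ((1:ℝ) • v) t := (hasDerivAt_id t).smul_const v
    simpa using this.const_add β
  have h0eq : β + (0:ℝ) • v = β := by simp
  have h1eq : β + (1:ℝ) • v = β' := by simp [hvdef]
  -- derivatives of g = L ∘ line
  have hLd : Differentiable ℝ L := hL.differentiable (by norm_num)
  have hg : ∀ t : ℝ, HasDerivAt (fun t => L (β + t • v)) (fderiv ℝ L (β + t • v) v) t :=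
    fun t => (hLd (β + t • v)).hasFDerivAt.comp_hasDerivAt t (hline t)
  have hF : ContDiff ℝ 1 (fderiv ℝ L) := hL.fderiv_right (by norm_num)
  have hg' : ∀ t : ℝ, HasDerivAt (fun t => fderiv ℝ L (β + t • v) v)
      (fderiv ℝ (fderiv ℝ L) (β + t • v) v v) t := by
    intro t
    have h1 : HasDerivAt (fun t : ℝ => fderiv ℝ L (β + t • v))
        (fderiv ℝ (fderiv ℝ L) (β + t • v) v) t :=
      ((hF.differentiable (by norm_num)) (β + t • v)).hasFDerivAt.comp_hasDerivAt t (hline t)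
    simpa using h1.clm_apply (hasDerivAt_const t v)
  -- Hessian bounds along the line
  have hHv : ∀ t : ℝ, ρm * ‖v‖ ^ 2 ≤ fderiv ℝ (fderiv ℝ L) (β + t • v) v v ∧
      fderiv ℝ (fderiv ℝ L) (β + t • v) v v ≤ ρp * ‖v‖ ^ 2 := by
    intro t
    have := hHess (β + t • v) v hv
    rwa [iteratedFDeriv_two_apply] at this
  -- Taylor bounds for L
  have hLlow : ρm * ‖v‖ ^ 2 / 2 ≤ L β' - L β - fderiv ℝ L β v := by
    have := taylor_lower _ _ _ hg hg' (ρm * ‖v‖ ^ 2) (fun t _ => (hHv t).1)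
    rwa [h0eq, h1eq] at this
  have hLup : L β' - L β - fderiv ℝ L β v ≤ ρp * ‖v‖ ^ 2 / 2 := by
    have := taylor_lower (fun t => -L (β + t • v)) (fun t => -(fderiv ℝ L (β + t • v) v))
      (fun t => -(fderiv ℝ (fderiv ℝ L) (β + t • v) v v))
      (fun t => (hg t).neg) (fun t => (hg' t).neg) (-(ρp * ‖v‖ ^ 2))
      (fun t _ => neg_le_neg (hHv t).2)
    simp only [h0eq, h1eq] at this
    linarith
  -- W part
  have hw : ∀ t : ℝ, HasDerivAt (fun t => W (β + t • v)) (fderiv ℝ W (β + t • v) v) t :=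
    fun t => (hW (β + t • v)).hasFDerivAt.comp_hasDerivAt t (hline t)
  have hgradW : ∀ x, ⟪gradient W x, v⟫ = fderiv ℝ W x v := fun x => by
    rw [gradient]; exact InnerProductSpace.toDual_symm_apply
  -- upper bound for W from concavity
  have hwconc : ConcaveOn ℝ Set.univ (fun t : ℝ => W (β + t • v)) := by
    refine ⟨convex_univ, ?_⟩
    intro x _ y _ a b ha hb hab
    have key : β + (a • x + b • y) • v = a • (β + x • v) + b • (β + y • v) := by
      have : a • (β + x • v) + b • (β + y • v) = (a + b) • β + (a * x + b * y) • v := by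
        module
      rw [this, hab, one_smul]; simp [smul_eq_mul]
    show a • W (β + x • v) + b • W (β + y • v) ≤ W (β + (a • x + b • y) • v)
    rw [key]
    exact hWconc.2 (Set.mem_univ _) (Set.mem_univ _) ha hb hab
  have hWup : W β' - W β - fderiv ℝ W β v ≤ 0 := by
    have := hwconc.slope_le_of_hasDerivAt (Set.mem_univ 0) (Set.mem_univ 1) zero_lt_one (hw 0)
    rw [slope_def_field] at this
    rw [h0eq, h1eq] at this
    simp only [div_one, sub_zero] at this
    linarith [this]
  -- lower bound for W from Lipschitz gradient
  have hWlow : -(η * ‖v‖ ^ 2) / 2 ≤ W β' - W β - fderiv ℝ W β v := by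
    have hf' : ∀ t ∈ Set.Icc (0:ℝ) 1,
        0 ≤ fderiv ℝ W (β + t • v) v - fderiv ℝ W β v + η * ‖v‖ ^ 2 * t := by
      intro t ht
      have hdiff : fderiv ℝ W (β + t • v) v - fderiv ℝ W β v
          = ⟪gradient W (β + t • v) - gradient W β, v⟫ := by
        rw [inner_sub_left, hgradW, hgradW]
      have hcs : |⟪gradient W (β + t • v) - gradient W β, v⟫|
          ≤ ‖gradient W (β + t • v) - gradient W β‖ * ‖v‖ := abs_real_inner_le_norm _ _
      have hlip : ‖gradient W (β + t • v) - gradient W β‖ ≤ η * (t * ‖v‖) := by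
        have := hWLip.dist_le_mul (β + t • v) β
        rw [dist_eq_norm, dist_eq_norm, add_sub_cancel_left] at this
        calc ‖gradient W (β + t • v) - gradient W β‖ ≤ η.toNNReal * ‖t • v‖ := this
          _ = η * (|t| * ‖v‖) := by
              rw [norm_smul, Real.norm_eq_abs, Real.coe_toNNReal _ hη]
          _ = η * (t * ‖v‖) := by rw [abs_of_nonneg ht.1]
      have hnn : 0 ≤ ‖v‖ := norm_nonneg _
      nlinarith [abs_nonneg (⟪gradient W (β + t • v) - gradient W β, v⟫ : ℝ),
        neg_abs_le (⟪gradient W (β + t • v) - gradient W β, v⟫ : ℝ), hdiff,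
        mul_le_mul_of_nonneg_right hlip hnn]
    have hm : MonotoneOn
        (fun t => W (β + t • v) - fderiv ℝ W β v * t + η * ‖v‖ ^ 2 * (t ^ 2 / 2))
        (Set.Icc 0 1) := by
      apply monoOn01 _
        (fun t => fderiv ℝ W (β + t • v) v - fderiv ℝ W β v + η * ‖v‖ ^ 2 * t)
      · intro t
        have h2 : HasDerivAt (fun t : ℝ => fderiv ℝ W β v * t) (fderiv ℝ W β v) t :=
          ((hasDerivAt_id t).const_mul _).congr_deriv (mul_one _)
        have h3 : HasDerivAt (fun t : ℝ => η * ‖v‖ ^ 2 * (t ^ 2 / 2)) (η * ‖v‖ ^ 2 * t) t := by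
          have : HasDerivAt (fun t : ℝ => t ^ 2 / 2) t t := by
            simpa using ((hasDerivAt_pow 2 t).div_const 2)
          simpa using this.const_mul (η * ‖v‖ ^ 2)
        exact ((hw t).sub h2).add h3
      · exact hf'
    have := hm (Set.left_mem_Icc.2 zero_le_one) (Set.right_mem_Icc.2 zero_le_one) zero_le_one
    simp only [h0eq, h1eq] at this
    nlinarith [this]
  -- gradient of the sum
  have hinner : ⟪v, gradient (fun b => L b + W b) β⟫
      = fderiv ℝ L β v + fderiv ℝ W β v := by
    rw [real_inner_comm]
    have h1 : ⟪gradient (fun b => L b + W b) β, v⟫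
        = fderiv ℝ (fun b => L b + W b) β v := by
      rw [gradient]; exact InnerProductSpace.toDual_symm_apply
    rw [h1, fderiv_fun_add (hLd β) (hW β), ContinuousLinearMap.add_apply]
  constructor
  · rw [hinner]
    nlinarith [hLlow, hWlow]
  · rw [hinner]
    nlinarith [hLup, hWup]
end
end

section
/- Let L : ℝ^{pq} → ℝ be twice continuously differentiable with ρ₋‖z‖₂² ≤ zᵀ∇²L(β)z for every β and every z with ‖z‖_{0,2} ≤ s, let W : ℝ^{pq} → ℝ be differentiable, concave, with η₋-Lipschitz gradient, let λ ≥ 0, and set L̃ = L + W and F_λ(β) = L̃(β) + λ‖β‖_{1,2}. Let β, β' ∈ ℝ^{pq} satisfy |{j : β_j ≠ 0 or β'_j ≠ 0}| ≤ s, and let ξ ∈ ℝ^{pq} be any subgradient of ‖·‖_{1,2} at β, i.e. ‖u‖_{1,2} ≥ ‖β‖_{1,2} + ⟨u − β, ξ⟩ for all u ∈ ℝ^{pq}. Then F_λ(β') − F_λ(β) − ⟨β'−β, ∇L̃(β) + λξ⟩ ≥ ((ρ₋ − η₋)/2)‖β'−β‖₂². -/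
open RealInnerProductSpace
noncomputable section

lemma my_inner_grad {E : Type*} [NormedAddCommGroup E] [InnerProductSpace ℝ E] [CompleteSpace E]
    (f : E → ℝ) (x v : E) : ⟪gradient f x, v⟫ = fderiv ℝ f x v := by
  rw [gradient]; exact InnerProductSpace.toDual_symm_apply

lemma le_of_deriv_nonneg_Icc (h h' : ℝ → ℝ) (hd : ∀ t, HasDerivAt h (h' t) t)
    (hpos : ∀ t ∈ Set.Ioo (0:ℝ) 1, 0 ≤ h' t) : h 0 ≤ h 1 := by
  have hm : MonotoneOn h (Set.Icc 0 1) := by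
    apply monotoneOn_of_deriv_nonneg (convex_Icc 0 1)
      (fun t _ => (hd t).continuousAt.continuousWithinAt)
      (fun t _ => ((hd t).differentiableAt).differentiableWithinAt)
    intro t ht
    rw [interior_Icc] at ht
    rw [(hd t).deriv]
    exact hpos t ht
  exact hm (by norm_num) (by norm_num) zero_le_one

lemma taylor_lower_s3 {E : Type*} [NormedAddCommGroup E] [InnerProductSpace ℝ E]
    (L : E → ℝ) (hL : ContDiff ℝ 2 L) (β v : E) (c : ℝ)
    (hc : ∀ x : E, c ≤ iteratedFDeriv ℝ 2 L x ![v, v]) :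
    L β + fderiv ℝ L β v + c / 2 ≤ L (β + v) := by
  set cur : ℝ → E := fun t => β + t • v with hcur
  have hcd : ∀ t : ℝ, HasDerivAt cur v t := by
    intro t
    have : HasDerivAt (fun t : ℝ => t • v) ((1:ℝ) • v) t :=
      (hasDerivAt_id t).smul_const v
    simpa [hcur] using this.const_add β
  have hLd : Differentiable ℝ L := hL.differentiable (by norm_num)
  set g1 : ℝ → ℝ := fun t => fderiv ℝ L (cur t) v with hg1def
  have hg : ∀ t, HasDerivAt (fun t => L (cur t)) (g1 t) t := fun t =>
    ((hLd (cur t)).hasFDerivAt).comp_hasDerivAt t (hcd t)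
  have hD : Differentiable ℝ (fderiv ℝ L) :=
    (hL.fderiv_right (m := 1) (by norm_num)).differentiable (by norm_num)
  have hg1 : ∀ t, HasDerivAt g1 (fderiv ℝ (fderiv ℝ L) (cur t) v v) t := by
    intro t
    have h1 : HasDerivAt (fun t => fderiv ℝ L (cur t)) (fderiv ℝ (fderiv ℝ L) (cur t) v) t :=
      ((hD (cur t)).hasFDerivAt).comp_hasDerivAt t (hcd t)
    have := h1.clm_apply (hasDerivAt_const t v)
    simpa using this
  have hcbound : ∀ t, c ≤ fderiv ℝ (fderiv ℝ L) (cur t) v v := by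
    intro t
    have := hc (cur t)
    rwa [iteratedFDeriv_two_apply] at this
  -- g1 t - c*t is monotone
  have hmono : Monotone (fun t => g1 t - c * t) := by
    apply monotone_of_deriv_nonneg
    · intro t
      have hct : HasDerivAt (fun t : ℝ => c * t) c t := by
        simpa using (hasDerivAt_id t).const_mul c
      exact ((hg1 t).sub hct).differentiableAt
    · intro t
      have hct : HasDerivAt (fun t : ℝ => c * t) c t := by
        simpa using (hasDerivAt_id t).const_mul c
      rw [show (fun t => g1 t - c * t) = g1 - fun t => c * t from rfl, ((hg1 t).sub hct).deriv]
      have := hcbound t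
      linarith
  have hg1lb : ∀ t ∈ Set.Ioo (0:ℝ) 1, g1 0 + c * t ≤ g1 t := by
    intro t ht
    have := hmono (le_of_lt ht.1)
    simp only at this
    linarith
  -- main function
  set G : ℝ → ℝ := fun t => L (cur t) - t * g1 0 - c * t ^ 2 / 2 with hGdef
  have hGd : ∀ t, HasDerivAt G (g1 t - g1 0 - c * t) t := by
    intro t
    have h2 : HasDerivAt (fun t : ℝ => t * g1 0) (g1 0) t := hasDerivAt_mul_const (g1 0)
    have h3 : HasDerivAt (fun t : ℝ => c * t ^ 2 / 2) (c * t) t := by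
      have := ((hasDerivAt_pow 2 t).const_mul c).div_const 2
      exact this.congr_deriv (by rw [show (2:ℕ) - 1 = 1 from rfl]; push_cast; ring)
    exact ((hg t).sub h2).sub h3
  have := le_of_deriv_nonneg_Icc G (fun t => g1 t - g1 0 - c * t) hGd
    (fun t ht => by have := hg1lb t ht; linarith)
  simp only [hGdef, hcur, hg1def, zero_smul, add_zero, one_smul, zero_mul, one_mul,
    zero_pow, one_pow, mul_zero, mul_one, sub_zero, zero_div] at this
  linarith

lemma descent_lower {E : Type*} [NormedAddCommGroup E] [InnerProductSpace ℝ E] [CompleteSpace E]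
    (W : E → ℝ) (hW : Differentiable ℝ W) (η : ℝ) (hη : 0 ≤ η)
    (hLip : LipschitzWith η.toNNReal (gradient W)) (β v : E) :
    W β + fderiv ℝ W β v - η / 2 * ‖v‖ ^ 2 ≤ W (β + v) := by
  set cur : ℝ → E := fun t => β + t • v with hcur
  have hcd : ∀ t : ℝ, HasDerivAt cur v t := by
    intro t
    have : HasDerivAt (fun t : ℝ => t • v) ((1:ℝ) • v) t :=
      (hasDerivAt_id t).smul_const v
    simpa [hcur] using this.const_add β
  set φ' : ℝ → ℝ := fun t => fderiv ℝ W (cur t) v with hφ'def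
  have hφ : ∀ t, HasDerivAt (fun t => W (cur t)) (φ' t) t := fun t =>
    ((hW (cur t)).hasFDerivAt).comp_hasDerivAt t (hcd t)
  have hlb : ∀ t : ℝ, 0 ≤ t → -(η * t * ‖v‖ ^ 2) ≤ φ' t - φ' 0 := by
    intro t ht
    have h1 : φ' t - φ' 0 = ⟪gradient W (cur t) - gradient W (cur 0), v⟫ := by
      rw [inner_sub_left, my_inner_grad, my_inner_grad]
    have h2 : ‖gradient W (cur t) - gradient W (cur 0)‖ ≤ η * t * ‖v‖ := by
      have := hLip.dist_le_mul (cur t) (cur 0)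
      rw [dist_eq_norm, dist_eq_norm] at this
      have hc : cur t - cur 0 = t • v := by simp [hcur]
      calc ‖gradient W (cur t) - gradient W (cur 0)‖ ≤ (η.toNNReal : ℝ) * ‖cur t - cur 0‖ :=
            this
        _ = η * t * ‖v‖ := by
            rw [hc, norm_smul, Real.coe_toNNReal _ hη, Real.norm_eq_abs, abs_of_nonneg ht]
            ring
    have h3 := abs_real_inner_le_norm (gradient W (cur t) - gradient W (cur 0)) v
    have h4 : |⟪gradient W (cur t) - gradient W (cur 0), v⟫| ≤ η * t * ‖v‖ ^ 2 := by
      calc |⟪gradient W (cur t) - gradient W (cur 0), v⟫|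
          ≤ ‖gradient W (cur t) - gradient W (cur 0)‖ * ‖v‖ := h3
        _ ≤ η * t * ‖v‖ * ‖v‖ := by
            apply mul_le_mul_of_nonneg_right h2 (norm_nonneg v)
        _ = η * t * ‖v‖ ^ 2 := by ring
    rw [h1]
    have := neg_abs_le ⟪gradient W (cur t) - gradient W (cur 0), v⟫
    linarith
  set Ψ : ℝ → ℝ := fun t => W (cur t) - t * φ' 0 + η * ‖v‖ ^ 2 * t ^ 2 / 2 with hΨdef
  have hΨd : ∀ t, HasDerivAt Ψ (φ' t - φ' 0 + η * ‖v‖ ^ 2 * t) t := by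
    intro t
    have h2 : HasDerivAt (fun t : ℝ => t * φ' 0) (φ' 0) t := hasDerivAt_mul_const (φ' 0)
    have h3 : HasDerivAt (fun t : ℝ => η * ‖v‖ ^ 2 * t ^ 2 / 2) (η * ‖v‖ ^ 2 * t) t := by
      have := ((hasDerivAt_pow 2 t).const_mul (η * ‖v‖ ^ 2)).div_const 2
      exact this.congr_deriv (by rw [show (2:ℕ) - 1 = 1 from rfl]; push_cast; ring)
    exact ((hφ t).sub h2).add h3
  have := le_of_deriv_nonneg_Icc Ψ _ hΨd (fun t ht => by
    have := hlb t (le_of_lt ht.1)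
    nlinarith [norm_nonneg v, sq_nonneg ‖v‖, ht.1.le])
  simp only [hΨdef, hcur, hφ'def, zero_smul, add_zero, one_smul, zero_mul, one_mul,
    zero_pow, one_pow, mul_zero, mul_one, sub_zero, zero_div] at this
  linarith


/-- The group `ℓ_{1,2}` norm: the sum of the Euclidean norms of the blocks. -/
def groupNorm {p q : ℕ} (β : EuclideanSpace ℝ (Fin p × Fin q)) : ℝ :=
  ∑ j, ‖blk β j‖

/-- Restricted strong convexity of the regularized objective
`F_λ(β) = L(β) + W(β) + λ‖β‖_{1,2}` along a subgradient of the group norm. -/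
theorem regularized_objective_rsc {p q : ℕ} (s : ℕ) (hs : 0 < s)
    (L W : EuclideanSpace ℝ (Fin p × Fin q) → ℝ) (hL : ContDiff ℝ 2 L)
    (ρm : ℝ)
    (hHess : ∀ β z : EuclideanSpace ℝ (Fin p × Fin q), blockCount z ≤ s →
      ρm * ‖z‖ ^ 2 ≤ iteratedFDeriv ℝ 2 L β ![z, z])
    (hW : Differentiable ℝ W) (hWconc : ConcaveOn ℝ Set.univ W)
    (η : ℝ) (hη : 0 ≤ η) (hWLip : LipschitzWith η.toNNReal (gradient W))
    (lam : ℝ) (hlam : 0 ≤ lam)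
    (β β' : EuclideanSpace ℝ (Fin p × Fin q))
    (hsupp : {j : Fin p | blk β j ≠ 0 ∨ blk β' j ≠ 0}.ncard ≤ s)
    (ξ : EuclideanSpace ℝ (Fin p × Fin q))
    (hξ : ∀ u : EuclideanSpace ℝ (Fin p × Fin q),
      groupNorm β + ⟪u - β, ξ⟫ ≤ groupNorm u) :
    (ρm - η) / 2 * ‖β' - β‖ ^ 2 ≤
      ((L β' + W β') + lam * groupNorm β') - ((L β + W β) + lam * groupNorm β) -
        ⟪β' - β, gradient (fun b => L b + W b) β + lam • ξ⟫ := by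
  set v := β' - β with hv
  have hβ' : β + v = β' := by rw [hv]; abel
  -- block count of v
  have hbc : blockCount v ≤ s := by
    refine le_trans (Set.ncard_le_ncard ?_ (Set.toFinite _)) hsupp
    intro j hj
    by_contra h
    rw [Set.mem_setOf_eq, not_or] at h
    obtain ⟨h1, h2⟩ := h
    rw [not_not] at h1 h2
    apply hj
    ext k
    have e1 : blk β j k = 0 := by rw [h1]; rfl
    have e2 : blk β' j k = 0 := by rw [h2]; rfl
    simp only [blk] at e1 e2 ⊢
    show v (j, k) = 0
    rw [hv]
    show β' (j, k) - β (j, k) = 0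
    rw [e1, e2, sub_zero]
  have hLd : Differentiable ℝ L := hL.differentiable (by norm_num)
  -- Taylor lower bound for L
  have hLt : L β + fderiv ℝ L β v + ρm * ‖v‖ ^ 2 / 2 ≤ L β' := by
    rw [← hβ']
    exact taylor_lower_s3 L hL β v (ρm * ‖v‖ ^ 2) (fun x => hHess x v hbc)
  -- descent lower bound for W
  have hWt : W β + fderiv ℝ W β v - η / 2 * ‖v‖ ^ 2 ≤ W β' := by
    rw [← hβ']
    exact descent_lower W hW η hη hWLip β v
  -- group norm part
  have hg := mul_le_mul_of_nonneg_left (hξ β') hlam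
  rw [mul_add] at hg
  -- rewrite inner products
  have h1 : ⟪v, gradient (fun b => L b + W b) β⟫ = fderiv ℝ L β v + fderiv ℝ W β v := by
    rw [real_inner_comm, my_inner_grad]
    rw [fderiv_fun_add (hLd β) (hW β)]
    rfl
  have h2 : ⟪v, lam • ξ⟫ = lam * ⟪v, ξ⟫ := real_inner_smul_right v ξ lam
  rw [inner_add_right, h1, h2]
  have hn : 0 ≤ ‖v‖ ^ 2 := sq_nonneg _
  linarith
end
end
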